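/- Let (X,‖·‖) be a finite-dimensional real normed space, n ≥ 2, ψ ∈ Ψ_n, and v_1,…,v_n ∈ X. Define f(u) := |||(u−v_1,…,u−v_n)|||_ψ for u ∈ X. Then the set of global minimizers of f over X is compact; moreover, every minimizer u satisfies ‖u‖ ≤ (1 + 1/n)·Σ_{i=1}^n ‖v_i‖. -/

import Mathlib

open Finset

/-- The class `Ψ_n` of continuous convex functions on the standard simplex `Ω_n`
with `ψ(e_i) = 1` and the renormalization inequality. -/
def PsiClass (n : ℕ) (ψ : (Fin n → ℝ) → ℝ) : Prop :=
  ContinuousOn ψ (stdSimplex ℝ (Fin n)) ∧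
  ConvexOn ℝ (stdSimplex ℝ (Fin n)) ψ ∧
  (∀ i : Fin n, ψ (fun j => if j = i then 1 else 0) = 1) ∧
  (∀ t ∈ stdSimplex ℝ (Fin n), ∀ i : Fin n, t i < 1 →
    (1 - t i) * ψ (fun j => if j = i then 0 else t j / (1 - t i)) ≤ ψ t)

-- The `ψ`-product norm `|||x|||_ψ` on `X^n`.
open scoped Classical in
noncomputable def prodNorm {X : Type*} [NormedAddCommGroup X] {n : ℕ}
    (ψ : (Fin n → ℝ) → ℝ) (x : Fin n → X) : ℝ :=
  if x = 0 then 0 else (∑ i, ‖x i‖) * ψ (fun i => ‖x i‖ / ∑ j, ‖x j‖)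

lemma psi_le_one {n : ℕ} {ψ : (Fin n → ℝ) → ℝ}
    (hconv : ConvexOn ℝ (stdSimplex ℝ (Fin n)) ψ)
    (hvert : ∀ i : Fin n, ψ (fun j => if j = i then 1 else 0) = 1)
    {t : Fin n → ℝ} (ht : t ∈ stdSimplex ℝ (Fin n)) : ψ t ≤ 1 := by
  have h := hconv.map_sum_le (t := Finset.univ) (w := t)
      (p := fun i => (fun j => if j = i then 1 else 0))
      (fun i _ => ht.1 i) ht.2 (fun i _ => ?_)
  · have he : (∑ i, t i • (fun j => if j = i then (1:ℝ) else 0)) = t := by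
      funext j
      simp [Finset.sum_apply, mul_ite]
    rw [he] at h
    calc ψ t ≤ ∑ i, t i • ψ (fun j => if j = i then 1 else 0) := h
      _ = ∑ i, t i := by simp [hvert]
      _ = 1 := ht.2
  · constructor
    · intro x; positivity
    · simp

lemma psi_ge_coord {n : ℕ} {ψ : (Fin n → ℝ) → ℝ}
    (hvert : ∀ i : Fin n, ψ (fun j => if j = i then 1 else 0) = 1)
    (hren : ∀ t ∈ stdSimplex ℝ (Fin n), ∀ i : Fin n, t i < 1 →
      (1 - t i) * ψ (fun j => if j = i then 0 else t j / (1 - t i)) ≤ ψ t)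
    (i : Fin n) :
    ∀ k : ℕ, ∀ t ∈ stdSimplex ℝ (Fin n),
      (Finset.univ.filter (fun j => j ≠ i ∧ t j ≠ 0)).card ≤ k → t i ≤ ψ t := by
  intro k
  induction k with
  | zero =>
    intro t ht hc
    have hfe : Finset.univ.filter (fun j => j ≠ i ∧ t j ≠ 0) = ∅ :=
      Finset.card_eq_zero.mp (Nat.le_zero.mp hc)
    have hz : ∀ j : Fin n, j ≠ i → t j = 0 := by
      intro j hj
      by_contra h
      have : j ∈ Finset.univ.filter (fun j => j ≠ i ∧ t j ≠ 0) := by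
        simp [hj, h]
      simp [hfe] at this
    have hti : t i = 1 := by
      have : ∑ j, t j = t i := Finset.sum_eq_single i (fun j _ hj => hz j hj) (by simp)
      rw [← this, ht.2]
    have hteq : t = (fun j => if j = i then 1 else 0) := by
      funext j
      by_cases hj : j = i
      · simp [hj, hti]
      · simp [hj, hz j hj]
    rw [hti, hteq, hvert i]
  | succ k ih =>
    intro t ht hc
    by_cases hck : (Finset.univ.filter (fun j => j ≠ i ∧ t j ≠ 0)).card ≤ k
    · exact ih t ht hck
    · have hcpos : 0 < (Finset.univ.filter (fun j => j ≠ i ∧ t j ≠ 0)).card := by omega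
      obtain ⟨j, hj⟩ := Finset.card_pos.mp hcpos
      simp only [Finset.mem_filter, Finset.mem_univ, true_and] at hj
      obtain ⟨hji, htj0⟩ := hj
      have htj_le : t j ≤ 1 := by
        rw [← ht.2]
        exact Finset.single_le_sum (fun m _ => ht.1 m) (Finset.mem_univ j)
      rcases lt_or_eq_of_le htj_le with htj1 | htj1
      · -- t j < 1, renormalize
        have hpos : 0 < 1 - t j := by linarith
        set s : Fin n → ℝ := fun m => if m = j then 0 else t m / (1 - t j) with hs
        have hsum_erase : ∑ m ∈ Finset.univ.erase j, t m = 1 - t j := by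
          have := Finset.add_sum_erase Finset.univ t (Finset.mem_univ j)
          rw [ht.2] at this
          linarith
        have hssum : ∑ m, s m = 1 := by
          rw [← Finset.add_sum_erase Finset.univ s (Finset.mem_univ j)]
          have h1 : s j = 0 := by simp [hs]
          have h2 : ∑ m ∈ Finset.univ.erase j, s m
              = (∑ m ∈ Finset.univ.erase j, t m) / (1 - t j) := by
            rw [Finset.sum_div]
            apply Finset.sum_congr rfl
            intro m hm
            have : m ≠ j := Finset.ne_of_mem_erase hm
            simp [hs, this]
          rw [h1, h2, hsum_erase, div_self (ne_of_gt hpos), zero_add]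
        have hsmem : s ∈ stdSimplex ℝ (Fin n) := by
          constructor
          · intro m
            by_cases hm : m = j
            · simp [hs, hm]
            · simp only [hs, if_neg hm]
              exact div_nonneg (ht.1 m) hpos.le
          · exact hssum
        have hcard : (Finset.univ.filter (fun m => m ≠ i ∧ s m ≠ 0)).card ≤ k := by
          have hsub : Finset.univ.filter (fun m => m ≠ i ∧ s m ≠ 0)
              ⊆ (Finset.univ.filter (fun m => m ≠ i ∧ t m ≠ 0)).erase j := by
            intro m hm
            simp only [Finset.mem_filter, Finset.mem_univ, true_and] at hm
            have hmj : m ≠ j := by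
              intro h; apply hm.2; simp [hs, h]
            have htm : t m ≠ 0 := by
              intro h; apply hm.2; simp [hs, hmj, h]
            simp [Finset.mem_erase, hmj, hm.1, htm]
          have := Finset.card_le_card hsub
          have hje : j ∈ Finset.univ.filter (fun m => m ≠ i ∧ t m ≠ 0) := by
            simp [hji, htj0]
          rw [Finset.card_erase_of_mem hje] at this
          omega
        have hIH := ih s hsmem hcard
        have hsi : s i = t i / (1 - t j) := by simp [hs, (Ne.symm hji)]
        have hr := hren t ht j htj1
        calc t i = (1 - t j) * (t i / (1 - t j)) := by field_simp
          _ ≤ (1 - t j) * ψ s := by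
              apply mul_le_mul_of_nonneg_left _ hpos.le
              rw [← hsi]; exact hIH
          _ ≤ ψ t := hr
      · -- t j = 1, so t = e_j and t i = 0
        have hz : ∀ m : Fin n, m ≠ j → t m = 0 := by
          intro m hm
          have h0 : ∑ m ∈ Finset.univ.erase j, t m = 0 := by
            have := Finset.add_sum_erase Finset.univ t (Finset.mem_univ j)
            rw [ht.2] at this
            linarith
          exact (Finset.sum_eq_zero_iff_of_nonneg
            (fun m _ => ht.1 m)).mp h0 m (by simp [hm])
        have hteq : t = (fun m => if m = j then 1 else 0) := by
          funext m
          by_cases hm : m = j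
          · simp [hm, ← htj1]
          · simp [hm, hz m hm]
        have hti : t i = 0 := hz i (Ne.symm hji)
        rw [hti, hteq, hvert j]
        norm_num

section Aux
variable {X : Type*} [NormedAddCommGroup X] {n : ℕ} {ψ : (Fin n → ℝ) → ℝ}

lemma sum_norm_pos {x : Fin n → X} (hx : x ≠ 0) : 0 < ∑ i, ‖x i‖ := by
  obtain ⟨i, hi⟩ : ∃ i, x i ≠ 0 := by
    by_contra h
    push_neg at h
    exact hx (funext h)
  exact Finset.sum_pos' (fun m _ => norm_nonneg _)
    ⟨i, Finset.mem_univ i, norm_pos_iff.mpr hi⟩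

lemma normalized_mem_simplex {x : Fin n → X} (hx : x ≠ 0) :
    (fun i => ‖x i‖ / ∑ j, ‖x j‖) ∈ stdSimplex ℝ (Fin n) := by
  have hpos := sum_norm_pos hx
  constructor
  · intro i
    exact div_nonneg (norm_nonneg _) hpos.le
  · rw [← Finset.sum_div, div_self (ne_of_gt hpos)]

lemma prodNorm_le_sum (hle : ∀ t ∈ stdSimplex ℝ (Fin n), ψ t ≤ 1) (x : Fin n → X) :
    prodNorm ψ x ≤ ∑ i, ‖x i‖ := by
  simp only [prodNorm]
  split_ifs with h
  · positivity
  · have h1 := hle _ (normalized_mem_simplex h)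
    have hpos := sum_norm_pos h
    nlinarith

lemma norm_le_prodNorm (hge : ∀ t ∈ stdSimplex ℝ (Fin n), ∀ i, t i ≤ ψ t)
    (x : Fin n → X) (i : Fin n) : ‖x i‖ ≤ prodNorm ψ x := by
  simp only [prodNorm]
  split_ifs with h
  · rw [h]; simp
  · have h1 := hge _ (normalized_mem_simplex h) i
    have hpos := sum_norm_pos h
    calc ‖x i‖ = (∑ j, ‖x j‖) * (‖x i‖ / ∑ j, ‖x j‖) := by field_simp
      _ ≤ (∑ j, ‖x j‖) * ψ (fun i => ‖x i‖ / ∑ j, ‖x j‖) :=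
          mul_le_mul_of_nonneg_left h1 hpos.le

lemma prodNorm_nonneg (hge : ∀ t ∈ stdSimplex ℝ (Fin n), ∀ i, t i ≤ ψ t)
    (x : Fin n → X) : 0 ≤ prodNorm ψ x := by
  rcases eq_or_ne x 0 with h | h
  · simp [prodNorm, h]
  · obtain ⟨i, _⟩ : ∃ i, x i ≠ 0 := by
      by_contra hh
      push_neg at hh
      exact h (funext hh)
    exact le_trans (norm_nonneg _) (norm_le_prodNorm hge x i)

end Aux

lemma prodNorm_continuous {X : Type*} [NormedAddCommGroup X] [NormedSpace ℝ X]
    {n : ℕ} {ψ : (Fin n → ℝ) → ℝ}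
    (hcont : ContinuousOn ψ (stdSimplex ℝ (Fin n)))
    (hle : ∀ t ∈ stdSimplex ℝ (Fin n), ψ t ≤ 1)
    (hge : ∀ t ∈ stdSimplex ℝ (Fin n), ∀ i, t i ≤ ψ t)
    (v : Fin n → X) :
    Continuous (fun u : X => prodNorm ψ (fun i => u - v i)) := by
  have hS : Continuous fun w : X => ∑ i, ‖w - v i‖ :=
    continuous_finset_sum _ fun i _ => (continuous_id.sub continuous_const).norm
  rw [continuous_iff_continuousAt]
  intro u
  by_cases hu : (fun i => u - v i) = (0 : Fin n → X)
  · have hS0 : (∑ i, ‖u - v i‖) = 0 := by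
      apply Finset.sum_eq_zero
      intro i _
      rw [show u - v i = 0 from congrFun hu i, norm_zero]
    have h0 : prodNorm ψ (fun i => u - v i) = 0 := by simp [prodNorm, hu]
    have htend : Filter.Tendsto (fun w : X => prodNorm ψ (fun i => w - v i))
        (nhds u) (nhds 0) := by
      apply squeeze_zero (fun w => prodNorm_nonneg hge _) (fun w => prodNorm_le_sum hle _)
      have := hS.tendsto u
      rwa [hS0] at this
    simpa [ContinuousAt, h0] using htend
  · set U : Set X := {w | (fun i => w - v i) ≠ (0 : Fin n → X)} with hU
    have hmap : Continuous fun w : X => (fun i => w - v i) :=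
      continuous_pi fun i => continuous_id.sub continuous_const
    have hUopen : IsOpen U := by
      have : U = (fun w : X => (fun i => w - v i)) ⁻¹' {(0 : Fin n → X)}ᶜ := rfl
      rw [this]
      exact isOpen_compl_singleton.preimage hmap
    have hSne : ∀ w ∈ U, (∑ i, ‖w - v i‖) ≠ 0 := fun w hw => (sum_norm_pos hw).ne'
    have hρ : ContinuousOn (fun w : X => (fun i => ‖w - v i‖ / ∑ j, ‖w - v j‖)) U := by
      apply continuousOn_pi.mpr
      intro i
      exact ((continuous_id.sub continuous_const).norm.continuousOn).div
        hS.continuousOn hSne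
    have hψρ : ContinuousOn
        (fun w : X => ψ (fun i => ‖w - v i‖ / ∑ j, ‖w - v j‖)) U :=
      hcont.comp hρ (fun w hw => normalized_mem_simplex hw)
    have hg : ContinuousOn
        (fun w : X => (∑ i, ‖w - v i‖) * ψ (fun i => ‖w - v i‖ / ∑ j, ‖w - v j‖)) U :=
      hS.continuousOn.mul hψρ
    have hgat := hg.continuousAt (hUopen.mem_nhds hu)
    apply hgat.congr
    filter_upwards [hUopen.mem_nhds hu] with w hw
    simp only [prodNorm, if_neg hw]

theorem stmt_11 {X : Type*} [NormedAddCommGroup X] [NormedSpace ℝ X]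
    [FiniteDimensional ℝ X]
    (n : ℕ) (hn : 2 ≤ n) (ψ : (Fin n → ℝ) → ℝ) (hψ : PsiClass n ψ)
    (v : Fin n → X) :
    IsCompact {u : X | ∀ w : X,
        prodNorm ψ (fun i => u - v i) ≤ prodNorm ψ (fun i => w - v i)} ∧
      ∀ u : X, (∀ w : X,
          prodNorm ψ (fun i => u - v i) ≤ prodNorm ψ (fun i => w - v i)) →
        ‖u‖ ≤ (1 + 1 / (n : ℝ)) * ∑ i, ‖v i‖ := by
  obtain ⟨hcont, hconv, hvert, hren⟩ := hψ
  have hle : ∀ t ∈ stdSimplex ℝ (Fin n), ψ t ≤ 1 :=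
    fun t ht => psi_le_one hconv hvert ht
  have hge : ∀ t ∈ stdSimplex ℝ (Fin n), ∀ i, t i ≤ ψ t := by
    intro t ht i
    exact psi_ge_coord hvert hren i n t ht
      (le_trans (Finset.card_filter_le _ _) (by simp))
  have hS0nn : (0:ℝ) ≤ ∑ i, ‖v i‖ := Finset.sum_nonneg fun i _ => norm_nonneg _
  have hn0 : (0:ℝ) < n := by
    have : (2:ℝ) ≤ n := by exact_mod_cast hn
    linarith
  have key : ∀ u : X, (∀ w : X,
      prodNorm ψ (fun i => u - v i) ≤ prodNorm ψ (fun i => w - v i)) →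
      ‖u‖ ≤ (1 + 1 / (n : ℝ)) * ∑ i, ‖v i‖ := by
    intro u hu
    have hfu : prodNorm ψ (fun i => u - v i) ≤ ∑ i, ‖v i‖ := by
      calc prodNorm ψ (fun i => u - v i) ≤ prodNorm ψ (fun i => (0:X) - v i) := hu 0
        _ ≤ ∑ i, ‖(0:X) - v i‖ := prodNorm_le_sum hle _
        _ = ∑ i, ‖v i‖ := by simp
    have hbd : ∀ i, ‖u‖ ≤ (∑ i, ‖v i‖) + ‖v i‖ := by
      intro i
      have h1 : ‖u - v i‖ ≤ ∑ i, ‖v i‖ :=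
        (norm_le_prodNorm hge (fun i => u - v i) i).trans hfu
      calc ‖u‖ = ‖(u - v i) + v i‖ := by rw [sub_add_cancel]
        _ ≤ ‖u - v i‖ + ‖v i‖ := norm_add_le _ _
        _ ≤ (∑ i, ‖v i‖) + ‖v i‖ := by linarith
    have hsum : (n:ℝ) * ‖u‖ ≤ (n:ℝ) * (∑ i, ‖v i‖) + ∑ i, ‖v i‖ := by
      have h := Finset.sum_le_sum (fun i (_ : i ∈ Finset.univ) => hbd i)
      simpa [Finset.sum_add_distrib, Finset.sum_const, nsmul_eq_mul, mul_comm] using h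
    have heq : (1 + 1 / (n : ℝ)) * ∑ i, ‖v i‖
        = ((n:ℝ) * (∑ i, ‖v i‖) + ∑ i, ‖v i‖) / n := by
      field_simp
    rw [heq, le_div_iff₀ hn0]
    nlinarith
  refine ⟨?_, key⟩
  have hfcont : Continuous (fun u : X => prodNorm ψ (fun i => u - v i)) :=
    prodNorm_continuous hcont hle hge v
  have hclosed : IsClosed {u : X | ∀ w : X,
      prodNorm ψ (fun i => u - v i) ≤ prodNorm ψ (fun i => w - v i)} := by
    have heq : {u : X | ∀ w : X,
        prodNorm ψ (fun i => u - v i) ≤ prodNorm ψ (fun i => w - v i)}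
        = ⋂ w : X, (fun u : X => prodNorm ψ (fun i => u - v i)) ⁻¹'
            Set.Iic (prodNorm ψ (fun i => w - v i)) := by
      ext u
      simp [Set.mem_iInter]
    rw [heq]
    exact isClosed_iInter fun w => isClosed_Iic.preimage hfcont
  have hbdd : Bornology.IsBounded {u : X | ∀ w : X,
      prodNorm ψ (fun i => u - v i) ≤ prodNorm ψ (fun i => w - v i)} := by
    apply (Metric.isBounded_closedBall
      (x := (0:X)) (r := (1 + 1 / (n : ℝ)) * ∑ i, ‖v i‖)).subset
    intro u hu
    rw [Metric.mem_closedBall, dist_zero_right]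
    exact key u hu
  exact Metric.isCompact_of_isClosed_isBounded hclosed hbdd
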